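/- Let b, c ∈ ℝ and let p, q : ℝ → ℝ be continuous with p(x) = b·x + x²·q(x) for all x and q(0) = c. Then the function g_p(x) = ( p(x) + q(x) − b·(b + x·q(x))·p(x) ) / (1 + p(x)²) is continuous and bounded on ℝ, and g_p(0) = c. -/

import Mathlib

lemma aux13 (b x P Q : ℝ) (hx : 1 ≤ |x|) (hP : P = b * x + x ^ 2 * Q) :
    |(P + Q - b * (b + x * Q) * P) / (1 + P ^ 2)| ≤ |1 - b ^ 2| / 2 + (1 + b ^ 2) / 2 + |b| := by
  have hx0 : x ≠ 0 := by
    intro h; rw [h] at hx; simp at hx; linarith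
  have hd : (0 : ℝ) < 1 + P ^ 2 := by positivity
  have key : (P + Q - b * (b + x * Q) * P) / (1 + P ^ 2)
      = (1 - b ^ 2) * (P / (1 + P ^ 2)) + ((1 + b ^ 2 * x ^ 2) / x ^ 2) * (P / (1 + P ^ 2))
        - b / x := by
    have hQ : Q = (P - b * x) / x ^ 2 := by
      field_simp [hP]
      rw [hP]; ring
    rw [hQ]
    field_simp
    ring
  rw [key]
  have hhalf : |P / (1 + P ^ 2)| ≤ 1 / 2 := by
    rw [abs_div, abs_of_pos hd, div_le_div_iff₀ hd (by norm_num)]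
    nlinarith [sq_nonneg (|P| - 1), sq_abs P]
  have hx2 : (1 : ℝ) ≤ x ^ 2 := by nlinarith [sq_abs x]
  have hcoef : |(1 + b ^ 2 * x ^ 2) / x ^ 2| ≤ 1 + b ^ 2 := by
    have hx2p : (0 : ℝ) < x ^ 2 := by positivity
    rw [abs_of_nonneg (by positivity), div_le_iff₀ hx2p]
    nlinarith
  have hbx : |b / x| ≤ |b| := by
    rw [abs_div]
    calc |b| / |x| ≤ |b| / 1 := by
          apply div_le_div_of_nonneg_left (abs_nonneg b) (by norm_num) hx
      _ = |b| := by ring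
  calc |(1 - b ^ 2) * (P / (1 + P ^ 2)) + (1 + b ^ 2 * x ^ 2) / x ^ 2 * (P / (1 + P ^ 2)) - b / x|
      ≤ |(1 - b ^ 2) * (P / (1 + P ^ 2)) + (1 + b ^ 2 * x ^ 2) / x ^ 2 * (P / (1 + P ^ 2))| + |b / x| :=
        abs_sub _ _
    _ ≤ |(1 - b ^ 2) * (P / (1 + P ^ 2))| + |(1 + b ^ 2 * x ^ 2) / x ^ 2 * (P / (1 + P ^ 2))| + |b / x| := by
        have := abs_add_le ((1 - b ^ 2) * (P / (1 + P ^ 2))) ((1 + b ^ 2 * x ^ 2) / x ^ 2 * (P / (1 + P ^ 2)))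
        linarith
    _ ≤ |1 - b ^ 2| * (1 / 2) + (1 + b ^ 2) * (1 / 2) + |b| := by
        rw [abs_mul, abs_mul]
        have h1 : |1 - b ^ 2| * |P / (1 + P ^ 2)| ≤ |1 - b ^ 2| * (1 / 2) :=
          mul_le_mul_of_nonneg_left hhalf (abs_nonneg _)
        have h2 : |(1 + b ^ 2 * x ^ 2) / x ^ 2| * |P / (1 + P ^ 2)| ≤ (1 + b ^ 2) * (1 / 2) :=
          mul_le_mul hcoef hhalf (abs_nonneg _) (by positivity)
        linarith
    _ = |1 - b ^ 2| / 2 + (1 + b ^ 2) / 2 + |b| := by ring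

/-- If `p, q : ℝ → ℝ` are continuous with `p(x) = b·x + x²·q(x)` and `q(0) = c`, then
`g_p(x) = (p(x) + q(x) − b·(b + x·q(x))·p(x))/(1 + p(x)²)` is continuous and bounded
on `ℝ`, and `g_p(0) = c`. -/
theorem stmt13 (b c : ℝ) (p q : ℝ → ℝ) (hp : Continuous p) (hq : Continuous q)
    (hpq : ∀ x, p x = b * x + x ^ 2 * q x) (hq0 : q 0 = c) :
    Continuous (fun x => (p x + q x - b * (b + x * q x) * p x) / (1 + p x ^ 2)) ∧
      (∃ C, ∀ x, |(p x + q x - b * (b + x * q x) * p x) / (1 + p x ^ 2)| ≤ C) ∧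
      (p 0 + q 0 - b * (b + 0 * q 0) * p 0) / (1 + p 0 ^ 2) = c := by
  have hden : ∀ x : ℝ, 1 + p x ^ 2 ≠ 0 := fun x => by positivity
  have hg : Continuous (fun x => (p x + q x - b * (b + x * q x) * p x) / (1 + p x ^ 2)) := by
    apply Continuous.div
    · continuity
    · continuity
    · exact hden
  refine ⟨hg, ?_, ?_⟩
  · obtain ⟨C₁, hC₁⟩ := (isCompact_Icc (a := (-1:ℝ)) (b := 1)).exists_bound_of_continuousOn
      hg.continuousOn
    refine ⟨max C₁ (|1 - b ^ 2| / 2 + (1 + b ^ 2) / 2 + |b|), fun x => ?_⟩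
    rcases le_or_gt (|x|) 1 with h | h
    · have hx : x ∈ Set.Icc (-1:ℝ) 1 := abs_le.mp h
      exact le_max_of_le_left (by simpa only [Real.norm_eq_abs] using hC₁ x hx)
    · exact le_max_of_le_right (aux13 b x (p x) (q x) h.le (hpq x))
  · have hp0 : p 0 = 0 := by rw [hpq 0]; ring
    rw [hp0, hq0]; ring
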